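/- If a < 0 < c and a + c > 0, then 𝔠(−a, c) + 2√2 · a · e^{a²/4} / (a² − c²) = 𝔠(a, c). -/

import Mathlib

open MeasureTheory Real Filter Topology

noncomputable section

/-- Transition kernel of Brownian motion killed at hitting zero (vanishing off `(0,∞)²`). -/
def gker (t x y : ℝ) : ℝ :=
  if 0 < x ∧ 0 < y then
    (Real.sqrt (2 * Real.pi * t))⁻¹ *
      (Real.exp (-(x - y) ^ 2 / (2 * t)) - Real.exp (-(x + y) ^ 2 / (2 * t)))
  else 0

/-- Normalizing constant `𝔠(a,c)`. -/
def cAC (a c : ℝ) : ℝ :=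
  ∫ p : ℝ × ℝ in Set.Ioi (0 : ℝ) ×ˢ Set.Ioi (0 : ℝ),
    Real.exp (-(c * p.1 + a * p.2) / Real.sqrt 2) * gker 1 p.1 p.2

open Set

lemma tilt_eq (l s y : ℝ) : Real.exp (l*y) * Real.exp (-(y-s)^2/2) =
    Real.exp (-(1/2) * (y - (s+l))^2) * Real.exp (l*s + l^2/2) := by
  rw [← Real.exp_add, ← Real.exp_add]; congr 1; ring

lemma tilt_integrable (l s : ℝ) :
    Integrable (fun y : ℝ => Real.exp (l*y) * Real.exp (-(y-s)^2/2)) := by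
  simp_rw [tilt_eq]
  exact ((integrable_exp_neg_mul_sq (by norm_num : (0:ℝ) < 1/2)).comp_sub_right (s+l)).mul_const _

lemma tilt_integral (l s : ℝ) : ∫ y : ℝ, Real.exp (l*y) * Real.exp (-(y-s)^2/2)
    = Real.sqrt (2*Real.pi) * Real.exp (l*s + l^2/2) := by
  simp_rw [tilt_eq, integral_mul_const]
  rw [integral_sub_right_eq_self (fun y : ℝ => Real.exp (-(1/2) * y^2)) (s+l)]
  rw [integral_gaussian]
  norm_num [Real.sqrt_div']
  ring

lemma integral_exp_neg_mul_Ioi' {k : ℝ} (hk : 0 < k) :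
    ∫ x in Ioi (0:ℝ), Real.exp (-(k*x)) = 1/k := by
  have := integral_comp_mul_left_Ioi (fun u : ℝ => Real.exp (-u)) 0 hk
  simp only [mul_zero] at this
  rw [this, integral_exp_neg_Ioi_zero]
  simp [one_div]

/-- half-line integral of a full-line-integrable function plus its reflection -/
lemma halfline_add_reflect (φ : ℝ → ℝ) (hφ : Integrable φ) :
    (∫ y in Ioi (0:ℝ), φ y) + (∫ y in Ioi (0:ℝ), φ (-y)) = ∫ y, φ y := by
  rw [integral_comp_neg_Ioi, neg_zero, add_comm,
    intervalIntegral.integral_Iic_add_Ioi hφ.integrableOn hφ.integrableOn]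

lemma inner_diff (μ x : ℝ) :
    ∫ y in Ioi (0:ℝ), (Real.exp (-(μ*y)) - Real.exp (μ*y)) *
      (Real.exp (-(y-x)^2/2) - Real.exp (-(y+x)^2/2))
    = Real.sqrt (2*Real.pi) * Real.exp (μ^2/2) * (Real.exp (-(μ*x)) - Real.exp (μ*x)) := by
  set φ1 : ℝ → ℝ := fun y => Real.exp (-μ*y) * Real.exp (-(y-x)^2/2) with hφ1
  set φ2 : ℝ → ℝ := fun y => Real.exp (-μ*y) * Real.exp (-(y-(-x))^2/2) with hφ2
  have h1 : Integrable φ1 := tilt_integrable _ _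
  have h2 : Integrable φ2 := tilt_integrable _ _
  have h1n : Integrable (fun y => φ1 (-y)) := by
    have : (fun y => φ1 (-y)) = fun y => Real.exp (μ*y) * Real.exp (-(y-(-x))^2/2) := by
      funext y; simp only [hφ1]; ring_nf
    rw [this]; exact tilt_integrable _ _
  have h2n : Integrable (fun y => φ2 (-y)) := by
    have : (fun y => φ2 (-y)) = fun y => Real.exp (μ*y) * Real.exp (-(y-x)^2/2) := by
      funext y; simp only [hφ2]; ring_nf
    rw [this]; exact tilt_integrable _ _
  have key : ∀ y : ℝ, (Real.exp (-(μ*y)) - Real.exp (μ*y)) *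
      (Real.exp (-(y-x)^2/2) - Real.exp (-(y+x)^2/2))
      = (φ1 y + φ1 (-y)) - (φ2 y + φ2 (-y)) := by
    intro y; simp only [hφ1, hφ2]; ring_nf
  rw [setIntegral_congr_fun measurableSet_Ioi (fun y _ => key y)]
  have S : (∫ y in Ioi (0:ℝ), (φ1 y + φ1 (-y)) - (φ2 y + φ2 (-y)))
      = ((∫ y in Ioi (0:ℝ), φ1 y) + ∫ y in Ioi (0:ℝ), φ1 (-y))
        - ((∫ y in Ioi (0:ℝ), φ2 y) + ∫ y in Ioi (0:ℝ), φ2 (-y)) := by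
    rw [integral_sub (f := fun y => φ1 y + φ1 (-y)) (g := fun y => φ2 y + φ2 (-y))
          (by exact h1.integrableOn.add h1n.integrableOn)
          (by exact h2.integrableOn.add h2n.integrableOn),
        integral_add (by exact h1.integrableOn) h1n.integrableOn,
        integral_add (by exact h2.integrableOn) h2n.integrableOn]
  rw [S, halfline_add_reflect _ h1, halfline_add_reflect _ h2]
  simp only [hφ1, hφ2, tilt_integral]
  rw [mul_sub, mul_assoc, mul_assoc, ← Real.exp_add, ← Real.exp_add]
  ring_nf

lemma gker_nonneg (x y : ℝ) : 0 ≤ gker 1 x y := by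
  unfold gker
  split_ifs with h
  · apply mul_nonneg (inv_nonneg.2 (Real.sqrt_nonneg _))
    rw [sub_nonneg]
    apply Real.exp_le_exp.2
    apply div_le_div_of_nonneg_right ?_ (by norm_num)
    nlinarith [mul_pos h.1 h.2]
  · exact le_rfl

lemma gker_le (x y : ℝ) :
    gker 1 x y ≤ (Real.sqrt (2*Real.pi))⁻¹ * Real.exp (-(y-x)^2/2) := by
  unfold gker
  split_ifs with h
  · rw [mul_one]
    apply mul_le_mul_of_nonneg_left ?_ (inv_nonneg.2 (Real.sqrt_nonneg _))
    have e1 : -(x - y) ^ 2 / (2*1) = -(y-x)^2/2 := by ring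
    rw [e1]
    exact sub_le_self _ (Real.exp_pos _).le
  · positivity

lemma measurable_f (b c : ℝ) :
    Measurable (fun p : ℝ × ℝ => Real.exp (-(c * p.1 + b * p.2) / Real.sqrt 2) * gker 1 p.1 p.2) := by
  apply Measurable.mul (by fun_prop)
  unfold gker
  refine Measurable.ite ?_ (by fun_prop) measurable_const
  exact measurableSet_Ioi.prod measurableSet_Ioi

lemma exp_split (b c x y : ℝ) : Real.exp (-(c * x + b * y) / Real.sqrt 2)
    = Real.exp (-(c / Real.sqrt 2 * x)) * Real.exp (-(b / Real.sqrt 2 * y)) := by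
  rw [← Real.exp_add]
  congr 1
  have h2 : Real.sqrt 2 ≠ 0 := by positivity
  have hs : Real.sqrt 2 * Real.sqrt 2 = 2 := Real.mul_self_sqrt (by norm_num)
  field_simp
  linear_combination

lemma integrableOn_cAC (b c : ℝ) (hbc : 0 < b + c) :
    IntegrableOn (fun p : ℝ × ℝ => Real.exp (-(c * p.1 + b * p.2) / Real.sqrt 2) * gker 1 p.1 p.2)
      (Ioi (0:ℝ) ×ˢ Ioi (0:ℝ)) := by
  set α := c / Real.sqrt 2 with hα
  set β := b / Real.sqrt 2 with hβ
  have hαβ : 0 < α + β := by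
    rw [hα, hβ, ← add_div]
    exact div_pos (by linarith) (by positivity)
  set f : ℝ × ℝ → ℝ := fun p => Real.exp (-(c * p.1 + b * p.2) / Real.sqrt 2) * gker 1 p.1 p.2 with hf
  set dom : ℝ → ℝ → ℝ := fun x y =>
    (Real.sqrt (2*Real.pi))⁻¹ * (Real.exp (-(α*x)) * (Real.exp (-β*y) * Real.exp (-(y-x)^2/2))) with hdom
  have domInt : ∀ x, Integrable (dom x) :=
    fun x => (((tilt_integrable (-β) x).const_mul _).const_mul _)
  have hb : ∀ x y, ‖f (x, y)‖ ≤ dom x y := by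
    intro x y
    rw [Real.norm_eq_abs, abs_of_nonneg (mul_nonneg (Real.exp_pos _).le (gker_nonneg x y))]
    calc Real.exp (-(c * x + b * y) / Real.sqrt 2) * gker 1 x y
        ≤ Real.exp (-(c * x + b * y) / Real.sqrt 2) *
          ((Real.sqrt (2*Real.pi))⁻¹ * Real.exp (-(y-x)^2/2)) :=
          mul_le_mul_of_nonneg_left (gker_le x y) (Real.exp_pos _).le
      _ = dom x y := by rw [exp_split b c x y, hdom]; dsimp only; rw [← hα, ← hβ]; ring
  have hmf : AEStronglyMeasurable f ((volume.restrict (Ioi 0)).prod (volume.restrict (Ioi 0))) :=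
    (measurable_f b c).aestronglyMeasurable
  have part1 : ∀ x : ℝ, Integrable (fun y => f (x, y)) (volume.restrict (Ioi 0)) := by
    intro x
    apply Integrable.mono' (domInt x).integrableOn
      ((measurable_f b c).comp (measurable_const.prodMk measurable_id)).aestronglyMeasurable
    exact Eventually.of_forall (fun y => hb x y)
  have domval : ∀ x : ℝ, ∫ y, dom x y = Real.exp (-(α+β)*x) * Real.exp (β^2/2) := by
    intro x
    rw [hdom]
    dsimp only
    rw [integral_const_mul, integral_const_mul, tilt_integral (-β) x]
    have c0 : Real.sqrt (2*Real.pi) ≠ 0 := by positivity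
    calc (Real.sqrt (2*Real.pi))⁻¹ * (Real.exp (-(α*x)) *
          (Real.sqrt (2*Real.pi) * Real.exp (-β*x + (-β)^2/2)))
        = ((Real.sqrt (2*Real.pi))⁻¹ * Real.sqrt (2*Real.pi)) *
          (Real.exp (-(α*x)) * Real.exp (-β*x + (-β)^2/2)) := by ring
      _ = Real.exp (-(α*x)) * Real.exp (-β*x + (-β)^2/2) := by
          rw [inv_mul_cancel₀ c0, one_mul]
      _ = _ := by simp only [← Real.exp_add]; congr 1; ring
  rw [IntegrableOn, Measure.volume_eq_prod, ← Measure.prod_restrict]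
  refine (integrable_prod_iff hmf).2 ⟨Eventually.of_forall part1, ?_⟩
  apply Integrable.mono' (g := fun x => Real.exp (-(α+β)*x) * Real.exp (β^2/2))
  · exact ((exp_neg_integrableOn_Ioi 0 hαβ).mul_const _)
  · exact hmf.norm.integral_prod_right'
  · refine Eventually.of_forall (fun x => ?_)
    rw [Real.norm_eq_abs, abs_of_nonneg (integral_nonneg (fun y => norm_nonneg _))]
    calc (∫ y in Ioi (0:ℝ), ‖f (x, y)‖)
        ≤ ∫ y in Ioi (0:ℝ), dom x y :=
          integral_mono_ae (part1 x).norm (domInt x).integrableOn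
            (Eventually.of_forall (fun y => hb x y))
      _ ≤ ∫ y, dom x y := setIntegral_le_integral (domInt x)
          (Eventually.of_forall (fun y => by positivity))
      _ = _ := domval x

/-- Reflection identity for the normalizing constant:
`𝔠(−a,c) + 2√2·a·e^{a²/4}/(a² − c²) = 𝔠(a,c)` for `a < 0 < c` with `a + c > 0`. -/
theorem statement14 (a c : ℝ) (ha : a < 0) (hc : 0 < c) (hac : 0 < a + c) :
    cAC (-a) c + 2 * Real.sqrt 2 * a * Real.exp (a ^ 2 / 4) / (a ^ 2 - c ^ 2) = cAC a c := by
  have h2 : (0:ℝ) < Real.sqrt 2 := by positivity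
  have hs : Real.sqrt 2 * Real.sqrt 2 = 2 := Real.mul_self_sqrt (by norm_num)
  set α := c / Real.sqrt 2 with hα
  set μ := a / Real.sqrt 2 with hμ
  have hαμ : 0 < α + μ := by
    rw [hα, hμ, ← add_div]; exact div_pos (by linarith) h2
  have hαμ' : 0 < α - μ := by
    rw [hα, hμ, div_sub_div_same]; exact div_pos (by linarith) h2
  have hIa : IntegrableOn
      (fun p : ℝ × ℝ => Real.exp (-(c * p.1 + a * p.2) / Real.sqrt 2) * gker 1 p.1 p.2)
      (Ioi (0:ℝ) ×ˢ Ioi (0:ℝ)) := integrableOn_cAC a c (by linarith)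
  have hIma : IntegrableOn
      (fun p : ℝ × ℝ => Real.exp (-(c * p.1 + (-a) * p.2) / Real.sqrt 2) * gker 1 p.1 p.2)
      (Ioi (0:ℝ) ×ˢ Ioi (0:ℝ)) := integrableOn_cAC (-a) c (by linarith)
  have hdiff : cAC a c - cAC (-a) c
      = ∫ p : ℝ × ℝ in Ioi (0:ℝ) ×ˢ Ioi (0:ℝ),
          (Real.exp (-(c * p.1 + a * p.2) / Real.sqrt 2) * gker 1 p.1 p.2
           - Real.exp (-(c * p.1 + (-a) * p.2) / Real.sqrt 2) * gker 1 p.1 p.2) := by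
    rw [cAC, cAC, ← integral_sub hIa hIma]
  -- iterated integral
  have hiter : (∫ p : ℝ × ℝ in Ioi (0:ℝ) ×ˢ Ioi (0:ℝ),
        (Real.exp (-(c * p.1 + a * p.2) / Real.sqrt 2) * gker 1 p.1 p.2
         - Real.exp (-(c * p.1 + (-a) * p.2) / Real.sqrt 2) * gker 1 p.1 p.2))
      = ∫ x in Ioi (0:ℝ), ∫ y in Ioi (0:ℝ),
          (Real.exp (-(c * x + a * y) / Real.sqrt 2) * gker 1 x y
           - Real.exp (-(c * x + (-a) * y) / Real.sqrt 2) * gker 1 x y) := by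
    rw [Measure.volume_eq_prod]
    exact setIntegral_prod _ (by
      rw [Measure.volume_eq_prod] at hIa hIma
      exact hIa.sub hIma)
  -- inner integral computation for x > 0
  have hinner : ∀ x ∈ Ioi (0:ℝ), (∫ y in Ioi (0:ℝ),
        (Real.exp (-(c * x + a * y) / Real.sqrt 2) * gker 1 x y
         - Real.exp (-(c * x + (-a) * y) / Real.sqrt 2) * gker 1 x y))
      = Real.exp (μ^2/2) * (Real.exp (-((α+μ)*x)) - Real.exp (-((α-μ)*x))) := by
    intro x hx
    have hpt : ∀ y ∈ Ioi (0:ℝ),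
        (Real.exp (-(c * x + a * y) / Real.sqrt 2) * gker 1 x y
         - Real.exp (-(c * x + (-a) * y) / Real.sqrt 2) * gker 1 x y)
        = (Real.exp (-(α*x)) * (Real.sqrt (2*Real.pi))⁻¹) *
          ((Real.exp (-(μ*y)) - Real.exp (μ*y)) *
           (Real.exp (-(y-x)^2/2) - Real.exp (-(y+x)^2/2))) := by
      intro y hy
      have hg : gker 1 x y = (Real.sqrt (2*Real.pi))⁻¹ *
          (Real.exp (-(y-x)^2/2) - Real.exp (-(y+x)^2/2)) := by
        unfold gker
        rw [if_pos ⟨hx, hy⟩, mul_one,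
          show -(x - y) ^ 2 / (2*1) = -(y-x)^2/2 by ring,
          show -(x + y) ^ 2 / (2*1) = -(y+x)^2/2 by ring]
      rw [hg, exp_split a c x y, exp_split (-a) c x y, ← hα,
        show -a / Real.sqrt 2 = -μ by rw [hμ]; ring,
        show -(-μ * y) = μ * y by ring]
      rw [← hμ]
      ring
    rw [setIntegral_congr_fun measurableSet_Ioi hpt, integral_const_mul, inner_diff μ x]
    have c0 : Real.sqrt (2*Real.pi) ≠ 0 := by positivity
    calc Real.exp (-(α*x)) * (Real.sqrt (2*Real.pi))⁻¹ *
          (Real.sqrt (2*Real.pi) * Real.exp (μ^2/2) * (Real.exp (-(μ*x)) - Real.exp (μ*x)))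
        = ((Real.sqrt (2*Real.pi))⁻¹ * Real.sqrt (2*Real.pi)) *
          (Real.exp (μ^2/2) * (Real.exp (-(α*x)) * Real.exp (-(μ*x))
            - Real.exp (-(α*x)) * Real.exp (μ*x))) := by ring
      _ = Real.exp (μ^2/2) * (Real.exp (-((α+μ)*x)) - Real.exp (-((α-μ)*x))) := by
          rw [inv_mul_cancel₀ c0, one_mul]
          simp only [← Real.exp_add]
          congr 2 <;> ring
  have houter : (∫ x in Ioi (0:ℝ),
        Real.exp (μ^2/2) * (Real.exp (-((α+μ)*x)) - Real.exp (-((α-μ)*x))))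
      = Real.exp (μ^2/2) * (1/(α+μ) - 1/(α-μ)) := by
    rw [integral_const_mul, integral_sub
      (by simpa only [neg_mul, IntegrableOn] using (exp_neg_integrableOn_Ioi 0 hαμ))
      (by simpa only [neg_mul, IntegrableOn] using (exp_neg_integrableOn_Ioi 0 hαμ')),
      integral_exp_neg_mul_Ioi' hαμ, integral_exp_neg_mul_Ioi' hαμ']
  -- put it together
  have hval : cAC a c - cAC (-a) c
      = Real.exp (μ^2/2) * (1/(α+μ) - 1/(α-μ)) := by
    rw [hdiff, hiter, setIntegral_congr_fun measurableSet_Ioi hinner, houter]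
  have hexp : Real.exp (μ^2/2) = Real.exp (a^2/4) := by
    congr 1
    rw [hμ, div_pow, Real.sq_sqrt (by norm_num : (0:ℝ) ≤ 2)]
    ring
  have hfrac : 1/(α+μ) - 1/(α-μ) = 2 * Real.sqrt 2 * a / (a^2 - c^2) := by
    have hne : a^2 - c^2 ≠ 0 := by nlinarith
    rw [hα, hμ, ← add_div, div_sub_div_same]
    have hca : c + a ≠ 0 := by linarith
    have hca' : c - a ≠ 0 := by linarith
    field_simp
    ring_nf
  rw [hexp, hfrac] at hval
  have : 2 * Real.sqrt 2 * a * Real.exp (a ^ 2 / 4) / (a ^ 2 - c ^ 2)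
      = Real.exp (a^2/4) * (2 * Real.sqrt 2 * a / (a^2 - c^2)) := by ring
  linarith [hval]
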